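/- arXiv:2003.00366 — 4 statements merged into one kernel-verified Lean document; each statement's English description precedes it below -/
import Mathlib

section
/- If d ≡ 2 (mod 6), then the rank-2 lattice with Gram matrix rows (3,1),(1,(d+1)/3) has cyclic discriminant group of order d. -/
/-- The linear functional `v ↦ v 0 - 3 * v 1` into `ZMod d`. -/
def auxF (d : ℕ) : (Fin 2 → ℤ) →ₗ[ℤ] ZMod d where
  toFun v := ((v 0 : ZMod d) - 3 * (v 1 : ZMod d))
  map_add' a b := by simp only [Pi.add_apply]; push_cast; ring
  map_smul' c v := by
    simp only [Pi.smul_apply, smul_eq_mul, RingHom.id_apply, zsmul_eq_mul]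
    push_cast; ring

/-- If `d ≡ 2 (mod 6)`, the rank-2 lattice with Gram matrix `!![3,1;1,(d+1)/3]`
has discriminant group (the cokernel of the Gram matrix on `ℤ²`) cyclic of order `d`. -/
theorem stmt_3 (d : ℕ) (hd : 0 < d) (hmod : d % 6 = 2) :
    Nonempty
      (((Fin 2 → ℤ) ⧸
          LinearMap.range (Matrix.toLin'
            (!![3, 1; 1, ((d : ℤ) + 1) / 3] : Matrix (Fin 2) (Fin 2) ℤ)))
        ≃+ ZMod d) := by
  set k : ℤ := ((d : ℤ) + 1) / 3 with hk
  have hdvd : (3 : ℤ) ∣ (d : ℤ) + 1 := by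
    have h2 : d % 3 = 2 := by omega
    have : ((d : ℤ)) % 3 = 2 := by exact_mod_cast (by omega : d % 3 = 2)
    omega
  have h3k : 3 * k = (d : ℤ) + 1 := by
    rw [hk, Int.mul_ediv_cancel' hdvd]
  clear hk
  clear_value k
  -- kernel of auxF equals range of the matrix map
  have hker : LinearMap.range (Matrix.toLin'
      (!![3, 1; 1, k] : Matrix (Fin 2) (Fin 2) ℤ)) = LinearMap.ker (auxF d) := by
    ext v
    constructor
    · rintro ⟨x, rfl⟩
      simp [LinearMap.mem_ker, auxF, Matrix.toLin'_apply, Matrix.mulVec,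
        dotProduct, Fin.sum_univ_two]
      have hc : ((k : ℤ) : ZMod d) * 3 = 1 := by
        have : ((3 * k : ℤ) : ZMod d) = (((d : ℤ) + 1 : ℤ) : ZMod d) := by rw [h3k]
        push_cast at this
        simpa [ZMod.natCast_self, mul_comm] using this
      push_cast
      linear_combination (-(x 1 : ZMod d)) * hc
    · intro hv
      have h0 : ((v 0 - 3 * v 1 : ℤ) : ZMod d) = 0 := by
        have := (LinearMap.mem_ker).mp hv
        simpa [auxF] using this
      obtain ⟨m, hm⟩ := (ZMod.intCast_zmod_eq_zero_iff_dvd _ d).mp h0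
      refine ⟨![v 1 + k * m, -m], ?_⟩
      funext i
      fin_cases i
      · simp [Matrix.toLin'_apply, Matrix.mulVec, dotProduct,
          Fin.sum_univ_two, Fin.mk_zero, Fin.mk_one]
        linear_combination m * h3k - hm
      · simp [Matrix.toLin'_apply, Matrix.mulVec, dotProduct,
          Fin.sum_univ_two, Fin.mk_zero, Fin.mk_one]
  -- auxF is surjective
  have hsurj : Function.Surjective (auxF d) := by
    intro z
    obtain ⟨n, rfl⟩ := ZMod.intCast_surjective z
    exact ⟨![n, 0], by simp [auxF]⟩
  exact ⟨((Submodule.quotEquivOfEq _ _ hker).trans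
    ((auxF d).quotKerEquivOfSurjective hsurj)).toAddEquiv⟩
end

section
/- There are no integers b, c such that 2 = 20b² − 98bc + 146c². -/
theorem stmt_5 : ¬ ∃ b c : ℤ, 2 = 20 * b ^ 2 - 98 * b * c + 146 * c ^ 2 := by
  rintro ⟨b, c, h⟩
  have key : (20*b - 49*c)^2 + 519*c^2 = 40 := by ring_nf; linarith
  have hc : c = 0 := by nlinarith [sq_nonneg (20*b - 49*c), sq_nonneg c]
  subst hc
  simp at key
  rcases eq_or_ne b 0 with hb | hb
  · subst hb; simp at key
  · have h1 : 1 ≤ b^2 := by nlinarith [Int.one_le_abs hb, sq_abs b, abs_nonneg b]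
    nlinarith
end

section
/- No element of {2, 6, 8, 14, 18, 26, 38, 42} is represented by the binary quadratic form 20b² − 98bc + 146c² with b, c ∈ ℤ. -/
theorem stmt_6 :
    ∀ n ∈ ({2, 6, 8, 14, 18, 26, 38, 42} : Finset ℤ),
      ¬ ∃ b c : ℤ, n = 20 * b ^ 2 - 98 * b * c + 146 * c ^ 2 := by
  intro n hn
  rintro ⟨b, c, h⟩
  have hle : n ≤ 42 := by fin_cases hn <;> norm_num
  have hc1 : -1 ≤ c := by nlinarith [sq_nonneg (40*b - 98*c), sq_nonneg (c+1)]
  have hc2 : c ≤ 1 := by nlinarith [sq_nonneg (40*b - 98*c), sq_nonneg (c-1)]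
  have hb1 : -4 ≤ b := by nlinarith [sq_nonneg (40*b - 98*c), sq_nonneg (c+1), sq_nonneg (c-1)]
  have hb2 : b ≤ 4 := by nlinarith [sq_nonneg (40*b - 98*c), sq_nonneg (c+1), sq_nonneg (c-1)]
  fin_cases hn <;> interval_cases b <;> interval_cases c <;> omega
end

section
/- Let n₁, n₂ be integers with 1 ≤ n₁ < n₂ and let τ be an integer with |τ| < 2√(n₁n₂ − n₁). Then the quadratic form Q(a,b,c) = 3a² + (2n₁+1)b² + (2n₂+1)c² + 2ab + 2ac + 2τbc takes value 2 for no integers a, b, c. -/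
theorem stmt_8 (n₁ n₂ τ : ℤ) (h1 : 1 ≤ n₁) (h12 : n₁ < n₂)
    (hτ : |(τ : ℝ)| < 2 * Real.sqrt ((n₁ * n₂ - n₁ : ℤ) : ℝ)) :
    ∀ a b c : ℤ,
      3 * a ^ 2 + (2 * n₁ + 1) * b ^ 2 + (2 * n₂ + 1) * c ^ 2
        + 2 * a * b + 2 * a * c + 2 * τ * b * c ≠ 2 := by
  -- first extract the integer inequality τ² ≤ 4 n₁ n₂ - 4 n₁ - 1
  have hn : (0:ℝ) ≤ ((n₁ * n₂ - n₁ : ℤ) : ℝ) := by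
    have : (0:ℤ) ≤ n₁ * n₂ - n₁ := by nlinarith
    exact_mod_cast this
  have hsqrt := Real.sq_sqrt hn
  have hsq : (τ:ℝ)^2 < 4 * ((n₁ * n₂ - n₁ : ℤ) : ℝ) := by
    nlinarith [abs_nonneg (τ:ℝ), Real.sqrt_nonneg ((n₁ * n₂ - n₁ : ℤ) : ℝ), sq_abs (τ:ℝ)]
  have ht2 : τ^2 ≤ 4*n₁*n₂ - 4*n₁ - 1 := by
    have h' : ((τ^2 : ℤ) : ℝ) < ((4*n₁*n₂ - 4*n₁ : ℤ) : ℝ) := by push_cast at hsq ⊢; linarith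
    have := Int.cast_lt.mp h'
    omega
  have habs1 : τ ≤ n₁ + n₂ - 1 := by nlinarith [sq_nonneg (n₁ - n₂ + 1), sq_nonneg (τ - (n₁ + n₂ - 1))]
  have habs2 : -(n₁ + n₂ - 1) ≤ τ := by nlinarith [sq_nonneg (n₁ - n₂ + 1), sq_nonneg (τ + (n₁ + n₂ - 1))]
  have hD : 144*n₁ + 60 ≤ 4*(6*n₁+1)*(6*n₂+1) - (6*τ-2)^2 := by nlinarith
  intro a b c h
  rcases eq_or_ne c 0 with hc | hc
  · subst hc
    rcases eq_or_ne b 0 with hb | hb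
    · subst hb
      rcases eq_or_ne a 0 with ha | ha
      · subst ha; norm_num at h
      · have ha2 : 1 ≤ a^2 := by
          have := sq_pos_of_ne_zero ha
          linarith
        nlinarith
    · have hb2 : 1 ≤ b^2 := by
        have := sq_pos_of_ne_zero hb
        linarith
      nlinarith [sq_nonneg (3*a + b)]
  · have hc2 : 1 ≤ c^2 := by
      have := sq_pos_of_ne_zero hc
      linarith
    have key : (144*n₁ + 60) * 1 ≤ (4*(6*n₁+1)*(6*n₂+1) - (6*τ-2)^2) * c^2 := by
      have h0 : (0:ℤ) ≤ 4*(6*n₁+1)*(6*n₂+1) - (6*τ-2)^2 := by linarith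
      calc (144*n₁ + 60) * 1 ≤ (4*(6*n₁+1)*(6*n₂+1) - (6*τ-2)^2) * 1 := by linarith
        _ ≤ (4*(6*n₁+1)*(6*n₂+1) - (6*τ-2)^2) * c^2 := by
            exact mul_le_mul_of_nonneg_left hc2 h0
    nlinarith [sq_nonneg (3*a + b + c), sq_nonneg (2*(6*n₁+1)*b + (6*τ-2)*c)]
end
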